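/- Under the linear time-dependent deterioration model p_{[j]} = a_{[j]} + b·S_{[j]}, where S_{[j]} is the starting time of the job in position j and jobs are processed consecutively from time 0 with no interruption, the actual processing time of the job in position j satisfies p_{[j]} = a_{[j]} + b·Σ_{t=1}^{j−1} (1+b)^{t−1} a_{[j−t]}. -/
import Mathlib


/-- Under the linear time-dependent deterioration model with consecutive
processing from time `0`, the actual processing time of the job in position `j`
is `p j = a j + b ∑_{t=1}^{j-1} (1+b)^(t-1) a (j-t)`. -/
theorem stmt_6 (n : ℕ) (a p S : ℕ → ℝ) (b : ℝ) (hb : 0 < b)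
    (ha : ∀ j, 1 ≤ j → j ≤ n → 0 < a j)
    (hS1 : S 1 = 0)
    (hSrec : ∀ j, 2 ≤ j → S j = S (j - 1) + p (j - 1))
    (hp : ∀ j, p j = a j + b * S j) :
    ∀ j, 1 ≤ j → j ≤ n →
      p j = a j + b * ∑ t ∈ Finset.Icc 1 (j - 1), (1 + b) ^ (t - 1) * a (j - t) := by
  have key : ∀ j, 1 ≤ j →
      S j = ∑ t ∈ Finset.Icc 1 (j - 1), (1 + b) ^ (t - 1) * a (j - t) := by
    intro j hj
    induction j, hj using Nat.le_induction with
    | base => simp [hS1]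
    | succ j hj ih =>
      have hS : S (j + 1) = S j + p j := by
        have := hSrec (j + 1) (by omega)
        simpa using this
      have hsplit : (Finset.Icc 1 (j + 1 - 1)) = insert 1 (Finset.Icc 2 j) := by
        simp only [Nat.add_sub_cancel]
        ext x
        simp only [Finset.mem_Icc, Finset.mem_insert]
        omega
      rw [hS, hp j, ih, hsplit, Finset.sum_insert (by simp)]
      have hre : ∑ t ∈ Finset.Icc 2 j, (1 + b) ^ (t - 1) * a (j + 1 - t)
          = ∑ s ∈ Finset.Icc 1 (j - 1), (1 + b) * ((1 + b) ^ (s - 1) * a (j - s)) := by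
        apply Finset.sum_nbij' (fun t => t - 1) (fun s => s + 1)
        · intro t ht; simp only [Finset.mem_Icc] at *; omega
        · intro s hs; simp only [Finset.mem_Icc] at *; omega
        · intro t ht; simp only [Finset.mem_Icc] at ht; omega
        · intro s hs; simp only [Finset.mem_Icc] at hs; omega
        · intro t ht
          simp only [Finset.mem_Icc] at ht
          have h1 : j + 1 - t = j - (t - 1) := by omega
          have h2 : t - 1 = (t - 1 - 1) + 1 := by omega
          rw [h1, ← mul_assoc, ← pow_succ']
          rw [← h2]
      rw [hre, ← Finset.mul_sum]
      simp only [pow_zero, one_mul, Nat.add_sub_cancel, Nat.sub_self]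
      ring
  intro j hj _
  rw [hp j, key j hj]
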